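/- If a side-information digraph G has exactly 5 vertices and mais(G) = 2, then the induced subgraph on any four vertices of G contains an edge, i.e., contains a pair of vertices i, j with both arcs i→j and j→i present. -/

import Mathlib

/-- `ε` is a (zero-error) index code for the side-information digraph `G` on `Fin n`:
each receiver `i` can decode `x i` from the codeword and its side information
`{x j : G i j}`. Messages and code symbols are bits, modeled as `ZMod 2`. -/
def IsIndexCode {n ℓ : ℕ} (G : Fin n → Fin n → Prop)
    (ε : (Fin n → ZMod 2) → (Fin ℓ → ZMod 2)) : Prop :=
  ∀ i : Fin n, ∃ δ : (Fin ℓ → ZMod 2) → ({j : Fin n // G i j} → ZMod 2) → ZMod 2,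
    ∀ x : Fin n → ZMod 2, δ (ε x) (fun j => x j.1) = x i

/-- The optimal index codelength `ℓ*(G)`. -/
noncomputable def optLen {n : ℕ} (G : Fin n → Fin n → Prop) : ℕ :=
  sInf {ℓ : ℕ | ∃ ε : (Fin n → ZMod 2) → (Fin ℓ → ZMod 2), IsIndexCode G ε}

/-- The subgraph of `G` induced on the vertex set `S` has no directed cycle. -/
def AcyclicOn {n : ℕ} (G : Fin n → Fin n → Prop) (S : Finset (Fin n)) : Prop :=
  ∀ i : Fin n, ¬ Relation.TransGen (fun a b => G a b ∧ a ∈ S ∧ b ∈ S) i i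

/-- `mais G`: the order of a maximum acyclic induced subgraph of `G`. -/
noncomputable def mais {n : ℕ} (G : Fin n → Fin n → Prop) : ℕ :=
  sSup {k : ℕ | ∃ S : Finset (Fin n), S.card = k ∧ AcyclicOn G S}

/-- `minrank G`: the minimum rank over `GF(2)` of a matrix fitting `G`
(ones on the diagonal, zero at off-diagonal non-arcs). -/
noncomputable def minrank {n : ℕ} (G : Fin n → Fin n → Prop) : ℕ :=
  sInf {r : ℕ | ∃ M : Matrix (Fin n) (Fin n) (ZMod 2),
    (∀ i, M i i = 1) ∧ (∀ i j, i ≠ j → ¬ G i j → M i j = 0) ∧ M.rank = r}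

/-- `G` contains an undirected cycle of length `k` (`k ≥ 3`): `k` distinct
vertices, cyclically arranged, with consecutive ones joined by edges
(arcs in both directions). -/
def HasUndirCycleLen {n : ℕ} (G : Fin n → Fin n → Prop) (k : ℕ) : Prop :=
  3 ≤ k ∧ ∃ v : ZMod k → Fin n, Function.Injective v ∧
    ∀ t : ZMod k, G (v t) (v (t + 1)) ∧ G (v (t + 1)) (v t)

/-- The set of edges of `G`, each edge `i - j` (both arcs present) recorded as
the unordered pair `{i, j}`. -/
def edgeSet {n : ℕ} (G : Fin n → Fin n → Prop) : Set (Finset (Fin n)) :=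
  {e | ∃ i j : Fin n, i ≠ j ∧ G i j ∧ G j i ∧ e = ({i, j} : Finset (Fin n))}

set_option maxRecDepth 10000 in
lemma bool12 : ∀ ab ba ac ca ad da bc cb bd db cd dc : Bool,
    ((ab && ba) || (ac && ca) || (ad && da) || (bc && cb) || (bd && db) || (cd && dc) ||
     (!ba && !ca && !cb) || (!ca && !ba && !bc) ||
     (!ba && !da && !db) || (!da && !ba && !bd) ||
     (!ca && !da && !dc) || (!da && !ca && !cd) ||
     (!ab && !cb && !ca) || (!cb && !ab && !ac) ||
     (!ab && !db && !da) || (!db && !ab && !ad) ||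
     (!cb && !db && !dc) || (!db && !cb && !cd) ||
     (!ac && !bc && !ba) || (!bc && !ac && !ab) ||
     (!ac && !dc && !da) || (!dc && !ac && !ad) ||
     (!bc && !dc && !db) || (!dc && !bc && !bd) ||
     (!ad && !bd && !ba) || (!bd && !ad && !ab) ||
     (!ad && !cd && !ca) || (!cd && !ad && !ac) ||
     (!bd && !cd && !cb) || (!cd && !bd && !bc)
    ) = true := by decide

lemma chain_acyclic {n : ℕ} (G : Fin n → Fin n → Prop) (hG : ∀ i, ¬ G i i)
    (p q r : Fin n) (hpq : p ≠ q) (hpr : p ≠ r) (hqr : q ≠ r)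
    (h1 : ¬ G q p) (h2 : ¬ G r p) (h3 : ¬ G r q) :
    AcyclicOn G ({p, q, r} : Finset (Fin n)) := by
  intro i hi
  set f : Fin n → ℕ := fun x => if x = p then 0 else if x = q then 1 else 2 with hf
  have key : ∀ x y : Fin n,
      (G x y ∧ x ∈ ({p,q,r} : Finset (Fin n)) ∧ y ∈ ({p,q,r} : Finset (Fin n))) →
      f x < f y := by
    rintro x y ⟨hxy, hx, hy⟩
    simp only [Finset.mem_insert, Finset.mem_singleton] at hx hy
    rcases hx with rfl|rfl|rfl <;> rcases hy with rfl|rfl|rfl <;>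
      first
      | exact absurd hxy (hG _)
      | exact absurd hxy h1
      | exact absurd hxy h2
      | exact absurd hxy h3
      | simp [hf, hpq, hpr, hqr, hpq.symm, hpr.symm, hqr.symm, Ne.symm]
  have h4 : Relation.TransGen (fun x y => f x < f y) i i := Relation.TransGen.mono key i i hi
  have h5 : Transitive (fun x y : Fin n => f x < f y) := fun _ _ _ a b => a.trans b
  rw [@Relation.transGen_eq_self _ (fun x y : Fin n => f x < f y) ⟨fun _ _ _ hab hbc => h5 hab hbc⟩] at h4
  exact lt_irrefl _ h4

lemma mais_ge_three {n : ℕ} (G : Fin n → Fin n → Prop) (hG : ∀ i, ¬ G i i)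
    (p q r : Fin n) (hpq : p ≠ q) (hpr : p ≠ r) (hqr : q ≠ r)
    (h1 : ¬ G q p) (h2 : ¬ G r p) (h3 : ¬ G r q) :
    3 ≤ mais G := by
  have hcard : ({p, q, r} : Finset (Fin n)).card = 3 := by
    rw [Finset.card_insert_of_notMem (by simp [hpq, hpr]),
        Finset.card_insert_of_notMem (by simp [hqr]), Finset.card_singleton]
  have hbdd : BddAbove {k : ℕ | ∃ S : Finset (Fin n), S.card = k ∧ AcyclicOn G S} := by
    refine ⟨n, ?_⟩
    rintro k ⟨S, hS, -⟩
    calc k = S.card := hS.symm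
    _ ≤ (Finset.univ : Finset (Fin n)).card := Finset.card_le_univ S
    _ = n := by simp
  exact le_csSup hbdd ⟨{p, q, r}, hcard, chain_acyclic G hG p q r hpq hpr hqr h1 h2 h3⟩


/-- If `G` has exactly 5 vertices and `mais G = 2`, then the induced subgraph
on any four vertices contains an edge (a pair with arcs in both directions). -/
theorem stmt4 (G : Fin 5 → Fin 5 → Prop) (hG : ∀ i, ¬ G i i) (hm : mais G = 2) :
    ∀ S : Finset (Fin 5), S.card = 4 →
      ∃ i ∈ S, ∃ j ∈ S, i ≠ j ∧ G i j ∧ G j i := by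
  classical
  intro S hS
  by_contra hcon
  push_neg at hcon
  -- extract four distinct elements
  have hne : S.Nonempty := Finset.card_pos.mp (by omega)
  obtain ⟨a, ha⟩ := hne
  have h3 : (S.erase a).card = 3 := by
    rw [Finset.card_erase_of_mem ha, hS]
  obtain ⟨b, c, d, hbc, hbd, hcd, hE⟩ := Finset.card_eq_three.mp h3
  have hb : b ∈ S := Finset.mem_of_mem_erase (hE ▸ (by simp : b ∈ ({b,c,d} : Finset (Fin 5))))
  have hc : c ∈ S := Finset.mem_of_mem_erase (hE ▸ (by simp : c ∈ ({b,c,d} : Finset (Fin 5))))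
  have hd : d ∈ S := Finset.mem_of_mem_erase (hE ▸ (by simp : d ∈ ({b,c,d} : Finset (Fin 5))))
  have hab : a ≠ b := fun h => (Finset.notMem_erase a S) (hE ▸ (h ▸ (by simp : b ∈ ({b,c,d} : Finset (Fin 5)))))
  have hac : a ≠ c := fun h => (Finset.notMem_erase a S) (hE ▸ (h ▸ (by simp : c ∈ ({b,c,d} : Finset (Fin 5)))))
  have had : a ≠ d := fun h => (Finset.notMem_erase a S) (hE ▸ (h ▸ (by simp : d ∈ ({b,c,d} : Finset (Fin 5)))))
  -- no digons among a b c d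
  have nodig : ∀ x ∈ S, ∀ y ∈ S, x ≠ y → ¬ (G x y ∧ G y x) := by
    rintro x hx y hy hxy ⟨h1, h2⟩
    exact (hcon x hx y hy hxy h1) h2
  -- apply bool12
  have key := bool12 (decide (G a b)) (decide (G b a)) (decide (G a c)) (decide (G c a))
    (decide (G a d)) (decide (G d a)) (decide (G b c)) (decide (G c b))
    (decide (G b d)) (decide (G d b)) (decide (G c d)) (decide (G d c))
  simp only [Bool.or_eq_true, Bool.and_eq_true, Bool.not_eq_true', decide_eq_true_eq,
    decide_eq_false_iff_not] at key
  have h2m : ¬ (3 ≤ mais G) := by omega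
  rcases key with key | h
  case inr => exact h2m (mais_ge_three G hG d c b hcd.symm hbd.symm hbc.symm h.1.1 h.1.2 h.2)
  rcases key with key | h
  case inr => exact h2m (mais_ge_three G hG d b c hbd.symm hcd.symm hbc h.1.1 h.1.2 h.2)
  rcases key with key | h
  case inr => exact h2m (mais_ge_three G hG d c a hcd.symm had.symm hac.symm h.1.1 h.1.2 h.2)
  rcases key with key | h
  case inr => exact h2m (mais_ge_three G hG d a c had.symm hcd.symm hac h.1.1 h.1.2 h.2)
  rcases key with key | h
  case inr => exact h2m (mais_ge_three G hG d b a hbd.symm had.symm hab.symm h.1.1 h.1.2 h.2)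
  rcases key with key | h
  case inr => exact h2m (mais_ge_three G hG d a b had.symm hbd.symm hab h.1.1 h.1.2 h.2)
  rcases key with key | h
  case inr => exact h2m (mais_ge_three G hG c d b hcd hbc.symm hbd.symm h.1.1 h.1.2 h.2)
  rcases key with key | h
  case inr => exact h2m (mais_ge_three G hG c b d hbc.symm hcd hbd h.1.1 h.1.2 h.2)
  rcases key with key | h
  case inr => exact h2m (mais_ge_three G hG c d a hcd hac.symm had.symm h.1.1 h.1.2 h.2)
  rcases key with key | h
  case inr => exact h2m (mais_ge_three G hG c a d hac.symm hcd had h.1.1 h.1.2 h.2)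
  rcases key with key | h
  case inr => exact h2m (mais_ge_three G hG c b a hbc.symm hac.symm hab.symm h.1.1 h.1.2 h.2)
  rcases key with key | h
  case inr => exact h2m (mais_ge_three G hG c a b hac.symm hbc.symm hab h.1.1 h.1.2 h.2)
  rcases key with key | h
  case inr => exact h2m (mais_ge_three G hG b d c hbd hbc hcd.symm h.1.1 h.1.2 h.2)
  rcases key with key | h
  case inr => exact h2m (mais_ge_three G hG b c d hbc hbd hcd h.1.1 h.1.2 h.2)
  rcases key with key | h
  case inr => exact h2m (mais_ge_three G hG b d a hbd hab.symm had.symm h.1.1 h.1.2 h.2)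
  rcases key with key | h
  case inr => exact h2m (mais_ge_three G hG b a d hab.symm hbd had h.1.1 h.1.2 h.2)
  rcases key with key | h
  case inr => exact h2m (mais_ge_three G hG b c a hbc hab.symm hac.symm h.1.1 h.1.2 h.2)
  rcases key with key | h
  case inr => exact h2m (mais_ge_three G hG b a c hab.symm hbc hac h.1.1 h.1.2 h.2)
  rcases key with key | h
  case inr => exact h2m (mais_ge_three G hG a d c had hac hcd.symm h.1.1 h.1.2 h.2)
  rcases key with key | h
  case inr => exact h2m (mais_ge_three G hG a c d hac had hcd h.1.1 h.1.2 h.2)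
  rcases key with key | h
  case inr => exact h2m (mais_ge_three G hG a d b had hab hbd.symm h.1.1 h.1.2 h.2)
  rcases key with key | h
  case inr => exact h2m (mais_ge_three G hG a b d hab had hbd h.1.1 h.1.2 h.2)
  rcases key with key | h
  case inr => exact h2m (mais_ge_three G hG a c b hac hab hbc.symm h.1.1 h.1.2 h.2)
  rcases key with key | h
  case inr => exact h2m (mais_ge_three G hG a b c hab hac hbc h.1.1 h.1.2 h.2)
  rcases key with key | h
  case inr => exact nodig c hc d hd hcd ⟨h.1, h.2⟩
  rcases key with key | h
  case inr => exact nodig b hb d hd hbd ⟨h.1, h.2⟩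
  rcases key with key | h
  case inr => exact nodig b hb c hc hbc ⟨h.1, h.2⟩
  rcases key with key | h
  case inr => exact nodig a ha d hd had ⟨h.1, h.2⟩
  rcases key with key | h
  case inr => exact nodig a ha c hc hac ⟨h.1, h.2⟩
  have h := key
  exact nodig a ha b hb hab ⟨h.1, h.2⟩
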